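/- If r ∈ A is lex-optimal and K(r) ≥ 2, then: the lowest-ratio level set L_1(r) is an independent set in G; the highest-ratio level set L_{K(r)}(r) equals the set of all neighbors of nodes of L_1(r) in G; the extreme ratios satisfy v_1(r) · v_{K(r)}(r) = 1; and Σ_{i∈L_1(r)} r_i = Σ_{i∈L_{K(r)}(r)} D_i. -/

import Mathlib

open Finset
open scoped Classical

noncomputable section

namespace SharingEcon

variable {V : Type*} [Fintype V] [DecidableEq V]

/-- The set of neighbors of a set of nodes: `N_S = ⋃ i ∈ S, N_i`. -/
def nbrs (G : SimpleGraph V) [DecidableRel G.Adj] (S : Finset V) : Finset V :=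
  S.biUnion fun i => G.neighborFinset i

/-- The set function `f(S) = ∑_{j ∈ N_S} D_j`. -/
def fS (G : SimpleGraph V) [DecidableRel G.Adj] (D : V → ℝ) (S : Finset V) : ℝ :=
  ∑ j ∈ nbrs G S, D j

/-- The polymatroid polyhedron `A` of a set function `f`. -/
def polyA (f : Finset V → ℝ) : Set (V → ℝ) :=
  {r | (∀ i, 0 ≤ r i) ∧ ∀ S : Finset V, ∑ i ∈ S, r i ≤ f S}

/-- The base `A₀` of the polymatroid. -/
def polyBase (f : Finset V → ℝ) : Set (V → ℝ) :=
  {r | r ∈ polyA f ∧ ∑ i, r i = f Finset.univ}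

/-- The coordinates of a vector sorted in nondecreasing order. -/
def sortedVec (x : V → ℝ) : List ℝ :=
  (Finset.univ.val.map x).sort (· ≤ ·)

/-- `x` is lexicographically at least `y` (comparing sorted coordinate vectors). -/
def lexGE (x y : V → ℝ) : Prop :=
  sortedVec x = sortedVec y ∨
    ∃ k : ℕ, (∀ j < k, (sortedVec x).getD j 0 = (sortedVec y).getD j 0) ∧
      (sortedVec y).getD k 0 < (sortedVec x).getD k 0

/-- `r` is lexicographically optimal in `A` for the sharing-ratio vectors `(r i / D i)`. -/
def LexOptimal (A : Set (V → ℝ)) (D : V → ℝ) (r : V → ℝ) : Prop :=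
  r ∈ A ∧ ∀ r' ∈ A, lexGE (fun i => r i / D i) (fun i => r' i / D i)

/-- The sharing ratio of node `i`. -/
def ratio (D r : V → ℝ) (i : V) : ℝ := r i / D i

/-- The distinct values of the sharing ratios, sorted increasingly. -/
def vals (D r : V → ℝ) : List ℝ :=
  (Finset.univ.image (ratio D r)).sort (· ≤ ·)

/-- The number `K(r)` of distinct sharing-ratio values. -/
def numLevels (D r : V → ℝ) : ℕ := (vals D r).length

/-- The `k`-th smallest distinct ratio value `v_k(r)` (1-indexed). -/
def v (D r : V → ℝ) (k : ℕ) : ℝ := (vals D r).getD (k - 1) 0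

/-- The `k`-th level set `L_k(r)` (1-indexed). -/
def level (D r : V → ℝ) (k : ℕ) : Finset V :=
  Finset.univ.filter fun i => ratio D r i = v D r k

end SharingEcon
namespace SharingEcon


section Aux
variable {V : Type*} [Fintype V] [DecidableEq V]

lemma msplit (s : Multiset ℝ) (a : ℝ) :
    s = s.filter (· < a) + (Multiset.replicate (s.count a) a + s.filter (a < ·)) := by
  ext b
  simp only [Multiset.count_add, Multiset.count_filter, Multiset.count_replicate]
  rcases lt_trichotomy b a with h | h | h
  · simp only [if_pos h, if_neg (not_lt.2 h.le), if_neg (show ¬ a = b from h.ne')]; simp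
  · subst h; simp [lt_irrefl]
  · simp only [if_neg (not_lt.2 h.le), if_pos h, if_neg (show ¬ a = b from h.ne)]; simp

lemma sort_decomp (s : Multiset ℝ) (a : ℝ) :
    Multiset.sort s (· ≤ ·) =
      Multiset.sort (s.filter (· < a)) (· ≤ ·) ++
      (List.replicate (s.count a) a ++
      Multiset.sort (s.filter (a < ·)) (· ≤ ·)) := by
  refine (fun hp h1 h2 => List.Perm.eq_of_pairwise' (r := (· ≤ ·)) h1 h2 hp) ?_ ?_ ?_
  · rw [← Multiset.coe_eq_coe, ← Multiset.coe_add, ← Multiset.coe_add]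
    rw [Multiset.sort_eq, Multiset.sort_eq, Multiset.sort_eq, Multiset.coe_replicate]
    exact (msplit s a).symm ▸ (msplit s a)
  · exact Multiset.pairwise_sort _ _
  · rw [List.pairwise_append]
    refine ⟨Multiset.pairwise_sort _ _, ?_, ?_⟩
    · rw [List.pairwise_append]
      refine ⟨List.pairwise_replicate.2 (by simp), Multiset.pairwise_sort _ _, ?_⟩
      intro x hx y hy
      rw [List.eq_of_mem_replicate hx]
      have h2 : y ∈ Multiset.filter (a < ·) s := (Multiset.mem_sort _).1 hy
      exact (Multiset.mem_filter.1 h2).2.le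
    · intro x hx y hy
      have hx' : x ∈ Multiset.filter (· < a) s := (Multiset.mem_sort _).1 hx
      have hxa : x < a := (Multiset.mem_filter.1 hx').2
      simp only [List.mem_append] at hy
      rcases hy with hy | hy
      · rw [List.eq_of_mem_replicate hy]; exact hxa.le
      · have h2 : y ∈ Multiset.filter (a < ·) s := (Multiset.mem_sort _).1 hy
        have := (Multiset.mem_filter.1 h2).2
        linarith

lemma bridge (s s' : Multiset ℝ) (hcard : Multiset.card s = Multiset.card s')
    (a : ℝ) (hfilt : s.filter (· < a) = s'.filter (· < a))
    (hcount : s'.count a < s.count a) :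
    ∃ k, (∀ j < k, (Multiset.sort s' (· ≤ ·)).getD j 0 = (Multiset.sort s (· ≤ ·)).getD j 0) ∧
      (Multiset.sort s (· ≤ ·)).getD k 0 < (Multiset.sort s' (· ≤ ·)).getD k 0 := by
  have hs := sort_decomp s a
  have hs' := sort_decomp s' a
  rw [← hfilt] at hs'
  set A := Multiset.sort (s.filter (· < a)) (· ≤ ·) with hAdef
  set B := Multiset.sort (s.filter (a < ·)) (· ≤ ·) with hBdef
  set B' := Multiset.sort (s'.filter (a < ·)) (· ≤ ·) with hB'def
  set n := s.count a with hndef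
  set n' := s'.count a with hn'def
  have hlen : A.length + (n + B.length) = A.length + (n' + B'.length) := by
    have h1 : (Multiset.sort s (· ≤ ·)).length = Multiset.card s := Multiset.length_sort _
    have h2 : (Multiset.sort s' (· ≤ ·)).length = Multiset.card s' := Multiset.length_sort _
    rw [hs] at h1; rw [hs'] at h2
    simp only [List.length_append, List.length_replicate] at h1 h2
    omega
  have hB'pos : 0 < B'.length := by omega
  refine ⟨A.length + n', ?_, ?_⟩
  · intro j hj
    rw [hs, hs']
    by_cases hjA : j < A.length
    · rw [List.getD_append _ _ _ _ hjA, List.getD_append _ _ _ _ hjA]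
    · push_neg at hjA
      rw [List.getD_append_right _ _ _ _ hjA, List.getD_append_right _ _ _ _ hjA]
      have hj1 : j - A.length < n' := by omega
      have hj2 : j - A.length < n := by omega
      rw [List.getD_append _ _ _ _ (by simpa using hj1), List.getD_append _ _ _ _ (by simpa using hj2)]
      rw [List.getD_eq_getElem _ _ (by simpa using hj1), List.getD_eq_getElem _ _ (by simpa using hj2)]
      simp
  · have hk : A.length + n' - A.length = n' := by omega
    have hL : (Multiset.sort s (· ≤ ·)).getD (A.length + n') 0 = a := by
      rw [hs, List.getD_append_right _ _ _ _ (by omega), hk,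
        List.getD_append _ _ _ _ (by simpa using hcount),
        List.getD_eq_getElem _ _ (by simpa using hcount)]
      simp
    have hR : (Multiset.sort s' (· ≤ ·)).getD (A.length + n') 0 = B'.getD 0 0 := by
      rw [hs', List.getD_append_right _ _ _ _ (by omega), hk,
        List.getD_append_right _ _ _ _ (by simp)]
      simp
    rw [hL, hR, List.getD_eq_getElem _ _ hB'pos]
    have hmem : B'[0] ∈ B' := List.getElem_mem _
    have hmem2 : B'[0] ∈ s'.filter (a < ·) := (Multiset.mem_sort _).1 hmem
    exact (Multiset.mem_filter.1 hmem2).2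

/-- Exchange lemma: if `x'` agrees with `x` off `T`, and on `T` everything strictly exceeds
`x i` for both vectors (except `x i` itself), then `x'` is lexicographically greater. -/
lemma lexGT_exchange (x x' : V → ℝ) (T : Finset V) (i : V) (hiT : i ∈ T)
    (hout : ∀ k, k ∉ T → x' k = x k) (hin' : ∀ k ∈ T, x i < x' k)
    (hin : ∀ k ∈ T, k ≠ i → x i < x k) :
    ∃ k, (∀ j < k, (sortedVec x').getD j 0 = (sortedVec x).getD j 0) ∧
      (sortedVec x).getD k 0 < (sortedVec x').getD k 0 := by
  have hsv : ∀ y : V → ℝ, sortedVec y = Multiset.sort (Finset.univ.val.map y) (· ≤ ·) :=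
    fun y => rfl
  rw [hsv, hsv]
  apply bridge
  · simp
  · rw [Multiset.filter_map, Multiset.filter_map]
    have h1 : Multiset.filter ((· < x i) ∘ x) Finset.univ.val
        = (Finset.univ.filter (fun k => x k < x i)).val := rfl
    have h2 : Multiset.filter ((· < x i) ∘ x') Finset.univ.val
        = (Finset.univ.filter (fun k => x' k < x i)).val := rfl
    rw [h1, h2]
    have hFeq : Finset.univ.filter (fun k => x k < x i)
        = Finset.univ.filter (fun k => x' k < x i) := by
      ext k
      simp only [Finset.mem_filter, Finset.mem_univ, true_and]
      by_cases hk : k ∈ T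
      · constructor
        · intro h
          rcases eq_or_ne k i with rfl | hne
          · exact absurd h (lt_irrefl _)
          · exact absurd h (not_lt.2 (hin k hk hne).le)
        · intro h
          exact absurd h (not_lt.2 (hin' k hk).le)
      · rw [hout k hk]
    rw [← hFeq]
    apply Multiset.map_congr rfl
    intro k hk
    have hk' : k ∈ Finset.univ.filter (fun k => x k < x i) := hk
    have hkT : k ∉ T := by
      intro hkT
      have := (Finset.mem_filter.1 hk').2
      rcases eq_or_ne k i with rfl | hne
      · exact absurd this (lt_irrefl _)
      · exact absurd this (not_lt.2 (hin k hkT hne).le)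
    exact (hout k hkT).symm
  · rw [Multiset.count_map, Multiset.count_map]
    have h1 : Multiset.filter (fun k => x i = x k) Finset.univ.val
        = (Finset.univ.filter (fun k => x i = x k)).val := rfl
    have h2 : Multiset.filter (fun k => x i = x' k) Finset.univ.val
        = (Finset.univ.filter (fun k => x i = x' k)).val := rfl
    rw [h1, h2]
    have hFeq : Finset.univ.filter (fun k => x i = x' k)
        = (Finset.univ.filter (fun k => x i = x k)).erase i := by
      ext k
      simp only [Finset.mem_filter, Finset.mem_univ, true_and, Finset.mem_erase]
      constructor
      · intro h
        have hkT : k ∉ T := fun hkT => absurd h.symm (ne_of_gt (hin' k hkT))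
        have hki : k ≠ i := fun he => hkT (he ▸ hiT)
        rw [hout k hkT] at h
        exact ⟨hki, h⟩
      · rintro ⟨hki, h⟩
        have hkT : k ∉ T := fun hkT => absurd h.symm (ne_of_gt (hin k hkT hki))
        rw [hout k hkT]
        exact h
    have hi : i ∈ Finset.univ.filter (fun k => x i = x k) := by
      simp [Finset.mem_filter]
    calc Multiset.card (Finset.univ.filter (fun k => x i = x' k)).val
        = ((Finset.univ.filter (fun k => x i = x k)).erase i).card := by rw [hFeq]; rfl
      _ < (Finset.univ.filter (fun k => x i = x k)).card :=
          Finset.card_erase_lt_of_mem hi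
      _ = Multiset.card (Finset.univ.filter (fun k => x i = x k)).val := rfl

lemma lexGE_not_lexGT (x y : V → ℝ) (h : lexGE x y)
    (hgt : ∃ k, (∀ j < k, (sortedVec y).getD j 0 = (sortedVec x).getD j 0) ∧
      (sortedVec x).getD k 0 < (sortedVec y).getD k 0) : False := by
  obtain ⟨k, hpre, hk⟩ := hgt
  rcases h with h | ⟨m, hpre', hm⟩
  · rw [h] at hk; exact lt_irrefl _ hk
  · rcases lt_trichotomy k m with hkm | rfl | hmk
    · exact absurd (hpre' k hkm) (ne_of_lt hk)
    · exact absurd hk (not_lt.2 hm.le)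
    · exact absurd (hpre m hmk) (ne_of_lt hm)

lemma nbrs_union (G : SimpleGraph V) [DecidableRel G.Adj] (S T : Finset V) :
    nbrs G (S ∪ T) = nbrs G S ∪ nbrs G T := by
  ext k; simp only [nbrs, mem_biUnion, mem_union]; constructor
  · rintro ⟨i, hi | hi, hk⟩
    · exact Or.inl ⟨i, hi, hk⟩
    · exact Or.inr ⟨i, hi, hk⟩
  · rintro (⟨i, hi, hk⟩ | ⟨i, hi, hk⟩)
    · exact ⟨i, Or.inl hi, hk⟩
    · exact ⟨i, Or.inr hi, hk⟩

lemma nbrs_mono (G : SimpleGraph V) [DecidableRel G.Adj] {S T : Finset V} (h : S ⊆ T) :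
    nbrs G S ⊆ nbrs G T := by
  intro k hk
  simp only [nbrs, mem_biUnion] at hk ⊢
  obtain ⟨i, hi, hk⟩ := hk
  exact ⟨i, h hi, hk⟩

lemma fS_submodular (G : SimpleGraph V) [DecidableRel G.Adj] (D : V → ℝ) (hD0 : ∀ i, 0 ≤ D i)
    (S T : Finset V) : fS G D (S ∪ T) + fS G D (S ∩ T) ≤ fS G D S + fS G D T := by
  unfold fS
  rw [nbrs_union]
  have h1 : nbrs G (S ∩ T) ⊆ nbrs G S ∩ nbrs G T :=
    subset_inter (nbrs_mono G inter_subset_left) (nbrs_mono G inter_subset_right)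
  have h2 : ∑ j ∈ nbrs G (S ∩ T), D j ≤ ∑ j ∈ nbrs G S ∩ nbrs G T, D j :=
    Finset.sum_le_sum_of_subset_of_nonneg h1 (fun i _ _ => hD0 i)
  have h3 : (∑ j ∈ nbrs G S ∪ nbrs G T, D j) + ∑ j ∈ nbrs G S ∩ nbrs G T, D j
      = (∑ j ∈ nbrs G S, D j) + ∑ j ∈ nbrs G T, D j := Finset.sum_union_inter
  linarith

lemma tight_union_inter (G : SimpleGraph V) [DecidableRel G.Adj] (D : V → ℝ)
    (hD0 : ∀ i, 0 ≤ D i) (r : V → ℝ) (hr : r ∈ polyA (fS G D)) (S T : Finset V)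
    (hS : ∑ i ∈ S, r i = fS G D S) (hT : ∑ i ∈ T, r i = fS G D T) :
    (∑ i ∈ S ∪ T, r i = fS G D (S ∪ T)) ∧ (∑ i ∈ S ∩ T, r i = fS G D (S ∩ T)) := by
  have h1 := hr.2 (S ∪ T)
  have h2 := hr.2 (S ∩ T)
  have hsub := fS_submodular G D hD0 S T
  have hsum : (∑ i ∈ S ∪ T, r i) + ∑ i ∈ S ∩ T, r i
      = (∑ i ∈ S, r i) + ∑ i ∈ T, r i := Finset.sum_union_inter
  constructor <;> linarith

/-- If `r` is lex-optimal and `ρ i < ρ j` then some tight set contains `i` but not `j`. -/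
lemma exists_tight_sep (G : SimpleGraph V) [DecidableRel G.Adj] (D : V → ℝ)
    (hD : ∀ i, 0 < D i) (r : V → ℝ) (hlex : LexOptimal (polyA (fS G D)) D r)
    {i j : V} (hij : r i / D i < r j / D j) :
    ∃ S : Finset V, i ∈ S ∧ j ∉ S ∧ ∑ k ∈ S, r k = fS G D S := by
  by_contra hcon
  push_neg at hcon
  obtain ⟨⟨hr0, hrA⟩, hopt⟩ := hlex
  have hii : i ≠ j := by rintro rfl; exact lt_irrefl _ hij
  set 𝒮 : Finset (Finset V) := Finset.univ.filter (fun S => i ∈ S ∧ j ∉ S) with h𝒮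
  have hi0 : ({i} : Finset V) ∈ 𝒮 := by
    simp [h𝒮, Finset.mem_filter, hii.symm]
  set E : Finset ℝ := 𝒮.image (fun S => fS G D S - ∑ k ∈ S, r k) with hE
  have hEne : E.Nonempty := ⟨_, Finset.mem_image_of_mem _ hi0⟩
  have hEpos : ∀ e ∈ E, 0 < e := by
    intro e he
    obtain ⟨S, hS, rfl⟩ := Finset.mem_image.1 he
    have h1 := hrA S
    have hS' := Finset.mem_filter.1 hS
    have h2 := hcon S hS'.2.1 hS'.2.2
    have : ∑ k ∈ S, r k < fS G D S := lt_of_le_of_ne h1 h2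
    linarith
  set ε₁ := E.min' hEne with hε₁
  have hε₁pos : 0 < ε₁ := hEpos _ (E.min'_mem hEne)
  set δ := (r j / D j - r i / D i) / 2 with hδdef
  have hδ : 0 < δ := by simp [hδdef]; linarith
  set ε := min ε₁ (min (D i * δ) (D j * δ)) with hεdef
  have hε : 0 < ε := lt_min hε₁pos (lt_min (mul_pos (hD i) hδ) (mul_pos (hD j) hδ))
  have hεi : ε ≤ D i * δ := le_trans (min_le_right _ _) (min_le_left _ _)
  have hεj : ε ≤ D j * δ := le_trans (min_le_right _ _) (min_le_right _ _)
  set r' : V → ℝ := fun k => r k + ((if k = i then ε else 0) - (if k = j then ε else 0))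
    with hr'def
  have hsum : ∀ S : Finset V, ∑ k ∈ S, r' k
      = (∑ k ∈ S, r k) + ((if i ∈ S then ε else 0) - (if j ∈ S then ε else 0)) := by
    intro S
    rw [hr'def]
    rw [Finset.sum_add_distrib, Finset.sum_sub_distrib]
    congr 2
    · exact Finset.sum_ite_eq' S i (fun _ => ε)
    · exact Finset.sum_ite_eq' S j (fun _ => ε)
  have hρi0 : 0 ≤ r i / D i := div_nonneg (hr0 i) (hD i).le
  have hrj : r j = (r j / D j) * D j := (div_mul_cancel₀ _ (hD j).ne').symm
  have hri : r i = (r i / D i) * D i := (div_mul_cancel₀ _ (hD i).ne').symm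
  have hr'A : r' ∈ polyA (fS G D) := by
    constructor
    · intro k
      rcases eq_or_ne k i with rfl | hki
      · simp [hr'def, hii]
        linarith [hr0 k]
      · rcases eq_or_ne k j with rfl | hkj
        · simp [hr'def, hki]
          nlinarith [hD k, hδ, hρi0]
        · simp [hr'def, hki, hkj, hr0 k]
    · intro S
      rw [hsum S]
      by_cases hiS : i ∈ S <;> by_cases hjS : j ∈ S
      · simp only [if_pos hiS, if_pos hjS]
        have := hrA S; linarith
      · simp only [if_pos hiS, if_neg hjS]
        have hmem : S ∈ 𝒮 := by simp [h𝒮, Finset.mem_filter, hiS, hjS]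
        have : ε₁ ≤ fS G D S - ∑ k ∈ S, r k :=
          Finset.min'_le E _ (Finset.mem_image_of_mem _ hmem)
        have hεε₁ : ε ≤ ε₁ := min_le_left _ _
        linarith
      · simp only [if_neg hiS, if_pos hjS]
        have := hrA S; linarith
      · simp only [if_neg hiS, if_neg hjS]
        have := hrA S; linarith
  refine lexGE_not_lexGT _ _ (hopt r' hr'A) ?_
  apply lexGT_exchange (fun k => r k / D k) (fun k => r' k / D k) {i, j} i
    (Finset.mem_insert_self _ _)
  · intro k hk
    simp only [Finset.mem_insert, Finset.mem_singleton, not_or] at hk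
    simp [hr'def, hk.1, hk.2]
  · intro k hk
    simp only [Finset.mem_insert, Finset.mem_singleton] at hk
    rcases hk with rfl | rfl
    · have : r' k = r k + ε := by simp [hr'def, hii]
      rw [this]
      rw [add_div]
      have : 0 < ε / D k := div_pos hε (hD k)
      linarith
    · have : r' k = r k - ε := by simp [hr'def, hii.symm]; ring
      rw [this, sub_div]
      have h1 : ε / D k ≤ δ := (div_le_iff₀ (hD k)).2 (by linarith [hεj])
      have : r i / D i < r k / D k - δ := by simp [hδdef]; linarith
      linarith
  · intro k hk hki
    simp only [Finset.mem_insert, Finset.mem_singleton] at hk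
    rcases hk with rfl | rfl
    · exact absurd rfl hki
    · exact hij

/-- Every node of a lex-optimal vector lies in some tight set. -/
lemma exists_tight_mem (G : SimpleGraph V) [DecidableRel G.Adj] (D : V → ℝ)
    (hD : ∀ i, 0 < D i) (r : V → ℝ) (hlex : LexOptimal (polyA (fS G D)) D r)
    (i : V) : ∃ S : Finset V, i ∈ S ∧ ∑ k ∈ S, r k = fS G D S := by
  by_contra hcon
  push_neg at hcon
  obtain ⟨⟨hr0, hrA⟩, hopt⟩ := hlex
  set 𝒮 : Finset (Finset V) := Finset.univ.filter (fun S => i ∈ S) with h𝒮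
  have hi0 : ({i} : Finset V) ∈ 𝒮 := by simp [h𝒮]
  set E : Finset ℝ := 𝒮.image (fun S => fS G D S - ∑ k ∈ S, r k) with hE
  have hEne : E.Nonempty := ⟨_, Finset.mem_image_of_mem _ hi0⟩
  have hEpos : ∀ e ∈ E, 0 < e := by
    intro e he
    obtain ⟨S, hS, rfl⟩ := Finset.mem_image.1 he
    have h1 := hrA S
    have hS' := Finset.mem_filter.1 hS
    have h2 := hcon S hS'.2
    have : ∑ k ∈ S, r k < fS G D S := lt_of_le_of_ne h1 h2
    linarith
  set ε := E.min' hEne with hεdef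
  have hε : 0 < ε := hEpos _ (E.min'_mem hEne)
  set r' : V → ℝ := fun k => r k + (if k = i then ε else 0) with hr'def
  have hsum : ∀ S : Finset V, ∑ k ∈ S, r' k
      = (∑ k ∈ S, r k) + (if i ∈ S then ε else 0) := by
    intro S
    rw [hr'def, Finset.sum_add_distrib]
    congr 1
    exact Finset.sum_ite_eq' S i (fun _ => ε)
  have hr'A : r' ∈ polyA (fS G D) := by
    constructor
    · intro k
      rcases eq_or_ne k i with rfl | hki
      · simp [hr'def]; linarith [hr0 k]
      · simp [hr'def, hki, hr0 k]
    · intro S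
      rw [hsum S]
      by_cases hiS : i ∈ S
      · simp only [if_pos hiS]
        have hmem : S ∈ 𝒮 := by simp [h𝒮, hiS]
        have : ε ≤ fS G D S - ∑ k ∈ S, r k :=
          Finset.min'_le E _ (Finset.mem_image_of_mem _ hmem)
        linarith
      · simp only [if_neg hiS]
        have := hrA S; linarith
  refine lexGE_not_lexGT _ _ (hopt r' hr'A) ?_
  apply lexGT_exchange (fun k => r k / D k) (fun k => r' k / D k) {i} i
    (Finset.mem_singleton_self _)
  · intro k hk
    simp only [Finset.mem_singleton] at hk
    simp [hr'def, hk]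
  · intro k hk
    simp only [Finset.mem_singleton] at hk
    subst hk
    have : r' k = r k + ε := by simp [hr'def]
    rw [this, add_div]
    have : 0 < ε / D k := div_pos hε (hD k)
    linarith
  · intro k hk hki
    simp only [Finset.mem_singleton] at hk
    exact absurd hk hki

lemma fS_empty (G : SimpleGraph V) [DecidableRel G.Adj] (D : V → ℝ) : fS G D ∅ = 0 := by
  simp [fS, nbrs]

/-- A tight set containing `i` and avoiding any finite set of strictly-larger-ratio nodes. -/
lemma inter_tight_avoid (G : SimpleGraph V) [DecidableRel G.Adj] (D : V → ℝ)
    (hD : ∀ i, 0 < D i) (r : V → ℝ) (hlex : LexOptimal (polyA (fS G D)) D r)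
    (i : V) (J : Finset V) (hJ : ∀ j ∈ J, r i / D i < r j / D j) :
    ∃ S : Finset V, i ∈ S ∧ (∀ j ∈ J, j ∉ S) ∧ ∑ k ∈ S, r k = fS G D S := by
  have hD0 : ∀ i, 0 ≤ D i := fun i => (hD i).le
  revert hJ
  induction J using Finset.induction_on with
  | empty =>
    intro _
    obtain ⟨S, h1, h2⟩ := exists_tight_mem G D hD r hlex i
    exact ⟨S, h1, by simp, h2⟩
  | @insert j J hjJ ih =>
    intro hJ
    obtain ⟨S, hiS, hJS, hS⟩ := ih (fun j hj => hJ j (mem_insert_of_mem hj))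
    obtain ⟨S', hiS', hjS', hS'⟩ := exists_tight_sep G D hD r hlex (hJ j (mem_insert_self _ _))
    refine ⟨S ∩ S', mem_inter.2 ⟨hiS, hiS'⟩, ?_,
      (tight_union_inter G D hD0 r hlex.1 S S' hS hS').2⟩
    intro j' hj'
    rcases mem_insert.1 hj' with rfl | hj'
    · exact fun h => hjS' (mem_inter.1 h).2
    · exact fun h => hJS j' hj' (mem_inter.1 h).1

/-- A tight superset of `J` inside `W`, given each point of `J` has a tight set inside `W`. -/
lemma union_tight_in (G : SimpleGraph V) [DecidableRel G.Adj] (D : V → ℝ)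
    (hD0 : ∀ i, 0 ≤ D i) (r : V → ℝ) (hr : r ∈ polyA (fS G D)) (W : Finset V) (J : Finset V)
    (hJ : ∀ i ∈ J, ∃ S : Finset V, i ∈ S ∧ S ⊆ W ∧ ∑ k ∈ S, r k = fS G D S) :
    ∃ T : Finset V, J ⊆ T ∧ T ⊆ W ∧ ∑ k ∈ T, r k = fS G D T := by
  revert hJ
  induction J using Finset.induction_on with
  | empty =>
    intro _
    exact ⟨∅, le_refl _, empty_subset _, by simp [fS_empty]⟩
  | @insert i J hiJ ih =>
    intro hJ
    obtain ⟨T, hJT, hTW, hT⟩ := ih (fun k hk => hJ k (mem_insert_of_mem hk))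
    obtain ⟨S, hiS, hSW, hS⟩ := hJ i (mem_insert_self _ _)
    refine ⟨T ∪ S, ?_, union_subset hTW hSW,
      (tight_union_inter G D hD0 r hr T S hT hS).1⟩
    intro k hk
    rcases mem_insert.1 hk with rfl | hk
    · exact mem_union_right _ hiS
    · exact mem_union_left _ (hJT hk)

end Aux

set_option maxHeartbeats 1000000 in
/-- if `r ∈ A` is lex-optimal and `K(r) ≥ 2`, then `L_1(r)` is an independent set
in `G`, `L_{K(r)}(r)` is exactly the set of all neighbors of nodes of `L_1(r)` in `G`,
`v_1(r) · v_{K(r)}(r) = 1`, and `Σ_{i∈L_1} r_i = Σ_{i∈L_K} D_i`. -/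
theorem lexopt_top_bottom_levels {V : Type*} [Fintype V] [DecidableEq V]
    (G : SimpleGraph V) [DecidableRel G.Adj]
    (hconn : G.Connected) (hniso : ∀ i, (G.neighborFinset i).Nonempty)
    (D : V → ℝ) (hD : ∀ i, 0 < D i)
    (r : V → ℝ) (hlex : LexOptimal (polyA (fS G D)) D r)
    (hK : 2 ≤ numLevels D r) :
    (∀ i ∈ level D r 1, ∀ j ∈ level D r 1, ¬ G.Adj i j) ∧
    level D r (numLevels D r) = nbrs G (level D r 1) ∧
    v D r 1 * v D r (numLevels D r) = 1 ∧
    ∑ i ∈ level D r 1, r i = ∑ i ∈ level D r (numLevels D r), D i := by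
  classical
  have hD0 : ∀ i, 0 ≤ D i := fun i => (hD i).le
  obtain ⟨⟨hr0, hrA⟩, -⟩ := id hlex
  have hVne : Nonempty V := hconn.nonempty
  have hne : (Finset.univ.image (ratio D r)).Nonempty := by
    obtain ⟨i⟩ := hVne
    exact ⟨ratio D r i, mem_image_of_mem _ (mem_univ i)⟩
  have hlenC : (vals D r).length = (Finset.univ.image (ratio D r)).card :=
    Finset.length_sort _
  have hlen0 : 0 < (vals D r).length := by
    rw [hlenC]; exact card_pos.2 hne
  -- v 1 is the minimum ratio, v K is the maximum ratio
  have hv1 : v D r 1 = (Finset.univ.image (ratio D r)).min' hne := by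
    show (vals D r).getD 0 0 = _
    rw [List.getD_eq_getElem _ _ hlen0]
    exact Finset.sorted_zero_eq_min'
  have hvK : v D r (numLevels D r) = (Finset.univ.image (ratio D r)).max' hne := by
    show (vals D r).getD (numLevels D r - 1) 0 = _
    have hlt : numLevels D r - 1 < (vals D r).length := by
      have h2 : numLevels D r = (vals D r).length := rfl
      omega
    rw [List.getD_eq_getElem _ _ hlt]
    exact Finset.sorted_last_eq_max'
  have hv1le : ∀ i, v D r 1 ≤ ratio D r i := by
    intro i
    rw [hv1]
    exact Finset.min'_le _ _ (mem_image_of_mem _ (mem_univ i))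
  have hvKge : ∀ i, ratio D r i ≤ v D r (numLevels D r) := by
    intro i
    rw [hvK]
    exact Finset.le_max' _ _ (mem_image_of_mem _ (mem_univ i))
  have hv1lt : v D r 1 < v D r (numLevels D r) := by
    rw [hv1, hvK]
    refine Finset.min'_lt_max'_of_card _ ?_
    rw [← hlenC]
    have h2 : numLevels D r = (vals D r).length := rfl
    omega
  set B := level D r 1 with hBdef
  set LK := level D r (numLevels D r) with hLKdef
  have hmemB : ∀ i, i ∈ B ↔ ratio D r i = v D r 1 := by
    intro i; simp [hBdef, level]
  have hmemLK : ∀ i, i ∈ LK ↔ ratio D r i = v D r (numLevels D r) := by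
    intro i; simp [hLKdef, level]
  have hBne : B.Nonempty := by
    obtain ⟨i, -, hi⟩ := Finset.mem_image.1 (Finset.min'_mem _ hne)
    exact ⟨i, (hmemB i).2 (by rw [hi, hv1])⟩
  have hLKne : LK.Nonempty := by
    obtain ⟨i, -, hi⟩ := Finset.mem_image.1 (Finset.max'_mem _ hne)
    exact ⟨i, (hmemLK i).2 (by rw [hi, hvK])⟩
  -- B is tight
  have hBtight : ∑ k ∈ B, r k = fS G D B := by
    have hprem : ∀ i ∈ B, ∃ S : Finset V, i ∈ S ∧ S ⊆ B ∧ ∑ k ∈ S, r k = fS G D S := by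
      intro i hi
      obtain ⟨S, hiS, hav, ht⟩ := inter_tight_avoid G D hD r hlex i
        (Finset.univ.filter (fun j => ratio D r i < ratio D r j))
        (fun j hj => (Finset.mem_filter.1 hj).2)
      refine ⟨S, hiS, ?_, ht⟩
      intro s hs
      by_contra hsB
      have hlt : ratio D r i < ratio D r s := by
        have h1 := hv1le s
        have h2 : ratio D r s ≠ v D r 1 := fun h => hsB ((hmemB s).2 h)
        have h3 : ratio D r i = v D r 1 := (hmemB i).1 hi
        rw [h3]
        exact lt_of_le_of_ne h1 (Ne.symm h2)
      exact hav s (Finset.mem_filter.2 ⟨mem_univ s, hlt⟩) hs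
    obtain ⟨T, h1, h2, h3⟩ := union_tight_in G D hD0 r hlex.1 B B hprem
    rwa [Finset.Subset.antisymm h2 h1] at h3
  -- univ \ LK is tight
  set U := Finset.univ \ LK with hUdef
  have hUtight : ∑ k ∈ U, r k = fS G D U := by
    have hprem : ∀ i ∈ U, ∃ S : Finset V, i ∈ S ∧ S ⊆ U ∧ ∑ k ∈ S, r k = fS G D S := by
      intro i hi
      have hlt : ∀ j ∈ LK, r i / D i < r j / D j := by
        intro j hj
        have h1 : ratio D r j = v D r (numLevels D r) := (hmemLK j).1 hj
        have h2 : ratio D r i ≠ v D r (numLevels D r) :=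
          fun h => (mem_sdiff.1 hi).2 ((hmemLK i).2 h)
        have h3 := hvKge i
        show ratio D r i < ratio D r j
        rw [h1]
        exact lt_of_le_of_ne h3 h2
      obtain ⟨S, hiS, hav, ht⟩ := inter_tight_avoid G D hD r hlex i LK hlt
      refine ⟨S, hiS, ?_, ht⟩
      intro s hs
      rw [hUdef, mem_sdiff]
      exact ⟨mem_univ s, fun hsLK => hav s hsLK hs⟩
    obtain ⟨T, h1, h2, h3⟩ := union_tight_in G D hD0 r hlex.1 U U hprem
    rwa [Finset.Subset.antisymm h2 h1] at h3
  -- univ is tight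
  have hUnivTight : ∑ k, r k = fS G D Finset.univ := by
    obtain ⟨T, h1, h2, h3⟩ := union_tight_in G D hD0 r hlex.1 Finset.univ Finset.univ
      (fun i _ => by
        obtain ⟨S, hiS, ht⟩ := exists_tight_mem G D hD r hlex i
        exact ⟨S, hiS, subset_univ _, ht⟩)
    rwa [Finset.Subset.antisymm (subset_univ T) h1] at h3
  have hnbuniv : nbrs G Finset.univ = Finset.univ := by
    refine Finset.eq_univ_of_forall (fun k => ?_)
    obtain ⟨m, hm⟩ := hniso k
    exact mem_biUnion.2 ⟨m, mem_univ m, (SimpleGraph.mem_neighborFinset _ _ _).2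
      ((SimpleGraph.mem_neighborFinset _ _ _).1 hm).symm⟩
  have htotal : ∑ k, r k = ∑ k, D k := by
    rw [hUnivTight]; unfold fS; rw [hnbuniv]
  -- ratio/sum conversions
  have hrmul : ∀ i, r i = ratio D r i * D i := by
    intro i
    unfold ratio
    rw [div_mul_cancel₀ _ (hD i).ne']
  have hrB : ∑ k ∈ B, r k = v D r 1 * ∑ k ∈ B, D k := by
    rw [Finset.mul_sum]
    exact Finset.sum_congr rfl (fun k hk => by rw [hrmul k, (hmemB k).1 hk])
  have hrLK : ∑ k ∈ LK, r k = v D r (numLevels D r) * ∑ k ∈ LK, D k := by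
    rw [Finset.mul_sum]
    exact Finset.sum_congr rfl (fun k hk => by rw [hrmul k, (hmemLK k).1 hk])
  set C := nbrs G B with hCdef
  have hCne : C.Nonempty := by
    obtain ⟨b, hb⟩ := hBne
    obtain ⟨m, hm⟩ := hniso b
    exact ⟨m, mem_biUnion.2 ⟨b, hb, hm⟩⟩
  have hDBpos : 0 < ∑ k ∈ B, D k := Finset.sum_pos (fun k _ => hD k) hBne
  have hDCpos : 0 < ∑ k ∈ C, D k := Finset.sum_pos (fun k _ => hD k) hCne
  have hDLKpos : 0 < ∑ k ∈ LK, D k := Finset.sum_pos (fun k _ => hD k) hLKne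
  have hDC : ∑ k ∈ C, D k = v D r 1 * ∑ k ∈ B, D k := by
    rw [← hrB]; exact hBtight.symm
  have hv1nonneg : 0 ≤ v D r 1 := by
    obtain ⟨b, hb⟩ := hBne
    rw [← (hmemB b).1 hb]
    exact div_nonneg (hr0 b) (hD b).le
  have hv1pos : 0 < v D r 1 := by
    rcases hv1nonneg.lt_or_eq with h | h
    · exact h
    · rw [← h, zero_mul] at hDC
      linarith
  -- r(C) ≥ D(B)
  have hnbsub : nbrs G (Finset.univ \ C) ⊆ Finset.univ \ B := by
    intro k hk
    obtain ⟨m, hm, hkm⟩ := mem_biUnion.1 hk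
    rw [mem_sdiff]
    refine ⟨mem_univ k, fun hkB => ?_⟩
    exact (mem_sdiff.1 hm).2 (mem_biUnion.2 ⟨k, hkB,
      (SimpleGraph.mem_neighborFinset _ _ _).2
        ((SimpleGraph.mem_neighborFinset _ _ _).1 hkm).symm⟩)
  have hrCge : ∑ k ∈ B, D k ≤ ∑ k ∈ C, r k := by
    have h1 : ∑ k ∈ Finset.univ \ C, r k ≤ ∑ k ∈ Finset.univ \ B, D k :=
      le_trans (hrA _) (Finset.sum_le_sum_of_subset_of_nonneg hnbsub (fun i _ _ => hD0 i))
    rw [Finset.sum_sdiff_eq_sub (subset_univ C), Finset.sum_sdiff_eq_sub (subset_univ B)] at h1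
    linarith
  have hrCle : ∑ k ∈ C, r k ≤ v D r (numLevels D r) * ∑ k ∈ C, D k := by
    rw [Finset.mul_sum]
    refine Finset.sum_le_sum (fun k _ => ?_)
    rw [hrmul k]
    exact mul_le_mul_of_nonneg_right (hvKge k) (hD0 k)
  have h14 : 1 ≤ v D r 1 * v D r (numLevels D r) := by
    nlinarith [hrCge, hrCle, hDC, hDBpos]
  -- the set W of nodes all of whose neighbors are top level
  set W := Finset.univ \ nbrs G U with hWdef
  have hWsub : nbrs G W ⊆ LK := by
    intro k hk
    obtain ⟨m, hm, hkm⟩ := mem_biUnion.1 hk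
    by_contra hkLK
    have hkU : k ∈ U := mem_sdiff.2 ⟨mem_univ k, hkLK⟩
    exact (mem_sdiff.1 hm).2 (mem_biUnion.2 ⟨k, hkU,
      (SimpleGraph.mem_neighborFinset _ _ _).2
        ((SimpleGraph.mem_neighborFinset _ _ _).1 hkm).symm⟩)
  have hDW : ∑ k ∈ W, D k = (∑ k, D k) - ∑ k ∈ nbrs G U, D k := by
    rw [hWdef, Finset.sum_sdiff_eq_sub (subset_univ _)]
  have h16 : v D r (numLevels D r) * ∑ k ∈ LK, D k = ∑ k ∈ W, D k := by
    have h1 : ∑ k ∈ U, r k = (∑ k, r k) - ∑ k ∈ LK, r k := by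
      rw [hUdef, Finset.sum_sdiff_eq_sub (subset_univ _)]
    have h2 : fS G D U = ∑ k ∈ nbrs G U, D k := rfl
    rw [h1, h2, htotal, hrLK] at hUtight
    linarith
  have hrWle : ∑ k ∈ W, r k ≤ ∑ k ∈ LK, D k := by
    refine le_trans (hrA W) ?_
    exact Finset.sum_le_sum_of_subset_of_nonneg hWsub (fun i _ _ => hD0 i)
  have hrWge : v D r 1 * ∑ k ∈ W, D k ≤ ∑ k ∈ W, r k := by
    rw [Finset.mul_sum]
    refine Finset.sum_le_sum (fun k _ => ?_)
    rw [hrmul k]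
    exact mul_le_mul_of_nonneg_right (hv1le k) (hD0 k)
  have h19 : v D r 1 * v D r (numLevels D r) ≤ 1 := by
    nlinarith [hrWle, hrWge, h16, hDLKpos]
  have hv1vK : v D r 1 * v D r (numLevels D r) = 1 := le_antisymm h19 h14
  have hvKpos : 0 < v D r (numLevels D r) := lt_trans hv1pos hv1lt
  -- C ⊆ LK
  have hrCeq : ∑ k ∈ C, r k = v D r (numLevels D r) * ∑ k ∈ C, D k := by
    have : v D r (numLevels D r) * ∑ k ∈ C, D k = ∑ k ∈ B, D k := by
      rw [hDC]; nlinarith [hv1vK]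
    linarith [hrCge, hrCle]
  have hCsub : C ⊆ LK := by
    intro k hk
    have hpt : ∀ k ∈ C, r k ≤ v D r (numLevels D r) * D k := by
      intro k _
      rw [hrmul k]
      exact mul_le_mul_of_nonneg_right (hvKge k) (hD0 k)
    have h1 : r k = v D r (numLevels D r) * D k := by
      by_contra hne'
      have hlt' : r k < v D r (numLevels D r) * D k := lt_of_le_of_ne (hpt k hk) hne'
      have : ∑ x ∈ C, r x < ∑ x ∈ C, v D r (numLevels D r) * D x :=
        Finset.sum_lt_sum hpt ⟨k, hk, hlt'⟩
      rw [← Finset.mul_sum] at this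
      linarith [hrCeq]
    refine (hmemLK k).2 ?_
    unfold ratio
    rw [h1, mul_div_assoc, div_self (hD k).ne', mul_one]
  -- W ⊆ B
  have hrWeq : ∑ k ∈ W, r k = v D r 1 * ∑ k ∈ W, D k := by
    have h1 : v D r 1 * ∑ k ∈ W, D k = ∑ k ∈ LK, D k := by
      rw [← h16]; nlinarith [hv1vK]
    linarith [hrWle, hrWge]
  have hWsubB : W ⊆ B := by
    intro k hk
    have hpt : ∀ k ∈ W, v D r 1 * D k ≤ r k := by
      intro k _
      rw [hrmul k]
      exact mul_le_mul_of_nonneg_right (hv1le k) (hD0 k)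
    have h1 : r k = v D r 1 * D k := by
      by_contra hne'
      have hlt' : v D r 1 * D k < r k := lt_of_le_of_ne (hpt k hk) (fun h => hne' h.symm)
      have : ∑ x ∈ W, v D r 1 * D x < ∑ x ∈ W, r x :=
        Finset.sum_lt_sum hpt ⟨k, hk, hlt'⟩
      rw [← Finset.mul_sum] at this
      linarith [hrWeq]
    refine (hmemB k).2 ?_
    unfold ratio
    rw [h1, mul_div_assoc, div_self (hD k).ne', mul_one]
  -- D-sums equal, hence LK = C
  have hDBC : ∑ k ∈ B, D k = v D r (numLevels D r) * ∑ k ∈ C, D k := by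
    rw [hDC]; nlinarith [hv1vK]
  have hDCLK : ∑ k ∈ C, D k = ∑ k ∈ LK, D k := by
    have h1 : ∑ k ∈ C, D k ≤ ∑ k ∈ LK, D k :=
      Finset.sum_le_sum_of_subset_of_nonneg hCsub (fun i _ _ => hD0 i)
    have h2 : ∑ k ∈ W, D k ≤ ∑ k ∈ B, D k :=
      Finset.sum_le_sum_of_subset_of_nonneg hWsubB (fun i _ _ => hD0 i)
    nlinarith [h16, hDBC, hvKpos]
  have hLKC : LK = C := by
    refine Finset.Subset.antisymm ?_ hCsub
    have h0 : ∑ k ∈ LK \ C, D k = 0 := by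
      have := Finset.sum_sdiff_eq_sub hCsub (f := D)
      linarith
    rw [← Finset.sdiff_eq_empty_iff_subset]
    by_contra hcon
    obtain ⟨x, hx⟩ := Finset.nonempty_iff_ne_empty.2 hcon
    have : 0 < ∑ k ∈ LK \ C, D k := Finset.sum_pos (fun k _ => hD k) ⟨x, hx⟩
    linarith
  refine ⟨?_, hLKC, hv1vK, ?_⟩
  · intro i hi j hj hadj
    have hjC : j ∈ C := mem_biUnion.2 ⟨i, hi, (SimpleGraph.mem_neighborFinset _ _ _).2 hadj⟩
    have h1 : ratio D r j = v D r (numLevels D r) := (hmemLK j).1 (hCsub hjC)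
    have h2 : ratio D r j = v D r 1 := (hmemB j).1 hj
    rw [h1] at h2
    exact absurd h2 (ne_of_gt hv1lt)
  · rw [hBtight, hLKC]
    rfl

end SharingEcon
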